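/- Asymptotic losing density for unbounded integer MuM (unit-restricted): Let m ≥ 2 and n ≥ 1. For X ∈ ℕ, let A(X) be the number of n-tuples t : Fin n → ℕ with 1 ≤ t i ≤ X and gcd(t i, m) = 1 for all i and prod_i (t i) ≡ 1 (mod m), and let B(X) be the number of n-tuples with 1 ≤ t i ≤ X and gcd(t i, m) = 1 for all i. Then the ratio A(X)/B(X) (as a real number) tends to 1/φ(m) as X → ∞, where φ is Euler's totient function. -/

import Mathlib

open Filter Finset



noncomputable def prodOneUnitsEquiv {M : Type*} [CommMonoid M] {ι : Type*} [Fintype ι] :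
    {f : ι → M // ∏ i, f i = 1} ≃ {u : ι → Mˣ // ∏ i, u i = 1} where
  toFun f := ⟨fun i =>
      (isUnit_of_dvd_one (f.2 ▸ Finset.dvd_prod_of_mem f.1 (Finset.mem_univ i))).unit, by
    apply Units.ext
    show (Units.coeHom M) _ = 1
    rw [map_prod (Units.coeHom M)]
    simp only [Units.coeHom_apply, IsUnit.unit_spec]
    exact f.2⟩
  invFun u := ⟨fun i => ↑(u.1 i), by
    show ∏ i, (Units.coeHom M) (u.1 i) = 1
    rw [← map_prod (Units.coeHom M), u.2, map_one]⟩
  left_inv f := by apply Subtype.ext; funext i; simp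
  right_inv u := by apply Subtype.ext; funext i; apply Units.ext; simp

def prodOneConsEquiv {G : Type*} [CommGroup G] {k : ℕ} :
    {f : Fin (k + 1) → G // ∏ i, f i = 1} ≃ (Fin k → G) where
  toFun f := fun j => f.1 j.succ
  invFun g := ⟨Fin.cons (∏ j, g j)⁻¹ g, by rw [Fin.prod_cons]; exact inv_mul_cancel _⟩
  left_inv f := by
    apply Subtype.ext
    have h2 := f.2
    rw [Fin.prod_univ_succ] at h2
    have h0 : f.1 0 = (∏ j : Fin k, f.1 j.succ)⁻¹ := eq_inv_of_mul_eq_one_right ((mul_comm _ _).trans h2)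
    show Fin.cons ((∏ j : Fin k, f.1 (Fin.succ j))⁻¹) (fun j => f.1 (Fin.succ j)) = f.1
    rw [← h0]
    exact Fin.cons_self_tail f.1
  right_inv g := by funext j; simp

lemma card_prodOne (m k : ℕ) [NeZero m] :
    ({r ∈ (univ : Finset (Fin (k + 1) → ZMod m)) | ∏ i, r i = 1}).card
      = Nat.totient m ^ k := by
  rw [← Fintype.card_subtype]
  rw [Fintype.card_congr (prodOneUnitsEquiv.trans prodOneConsEquiv)]
  simp [ZMod.card_units_eq_totient]


lemma resCount_bounds (m X : ℕ) [NeZero m] (hm : 2 ≤ m) (c : ZMod m) (hc : IsUnit c) :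
    X / m ≤ #{x ∈ Finset.Ioc 0 X | ((x : ℕ) : ZMod m) = c} ∧
      #{x ∈ Finset.Ioc 0 X | ((x : ℕ) : ZMod m) = c} ≤ X / m + 1 := by
  have hm0 : 0 < m := by omega
  haveI : Fact (1 < m) := ⟨by omega⟩
  set v := c.val with hv
  have hc0 : c ≠ 0 := by
    rintro rfl
    exact not_isUnit_zero hc
  have hv1 : 1 ≤ v := by
    have := (ZMod.val_eq_zero c).not.mpr hc0
    omega
  have hv2 : v < m := ZMod.val_lt c
  have hset : {x ∈ Finset.Ioc 0 X | ((x : ℕ) : ZMod m) = c} =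
      {x ∈ Finset.Ioc 0 X | x ≡ v [MOD m]} := by
    apply Finset.filter_congr
    intro x _
    conv_lhs => rw [← ZMod.natCast_zmod_val c]
    rw [ZMod.natCast_eq_natCast_iff]
  have hcard := Nat.Ioc_filter_modEq_card 0 X hm0 v
  rw [hset]
  generalize hq : X / m = q
  have hqm : m * q + X % m = X := by rw [← hq]; exact Nat.div_add_mod X m
  have hqr : X % m < m := Nat.mod_lt X hm0
  have hmQ : (0 : ℚ) < (m : ℚ) := by exact_mod_cast hm0
  have h0 : ⌊(((0 : ℕ) : ℚ) - (v : ℚ)) / (m : ℚ)⌋ = -1 := by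
    rw [Int.floor_eq_iff]
    rw [le_div_iff₀ hmQ, div_lt_iff₀ hmQ]
    have hv1' : (1 : ℚ) ≤ (v : ℚ) := by exact_mod_cast hv1
    have hv2' : (v : ℚ) ≤ (m : ℚ) := by exact_mod_cast hv2.le
    constructor
    · push_cast; nlinarith
    · push_cast; nlinarith
  have hF1 : (q : ℤ) - 1 ≤ ⌊(((X : ℕ) : ℚ) - (v : ℚ)) / (m : ℚ)⌋ := by
    rw [Int.le_floor, le_div_iff₀ hmQ]
    have hqm' : (m : ℚ) * q + ((X % m : ℕ) : ℚ) = X := by exact_mod_cast hqm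
    have h1' : ((q : ℕ) : ℚ) * m ≤ (X : ℚ) := by
      have : (0:ℚ) ≤ ((X % m : ℕ) : ℚ) := by positivity
      nlinarith
    have hv2' : (v : ℚ) ≤ (m : ℚ) := by exact_mod_cast hv2.le
    push_cast
    nlinarith
  have hF2 : ⌊(((X : ℕ) : ℚ) - (v : ℚ)) / (m : ℚ)⌋ ≤ (q : ℤ) := by
    rw [← Int.lt_add_one_iff, Int.floor_lt, div_lt_iff₀ hmQ]
    have hqm' : (m : ℚ) * q + ((X % m : ℕ) : ℚ) = X := by exact_mod_cast hqm
    have h2' : (X : ℚ) < (m : ℚ) * ((q : ℕ) : ℚ) + m := by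
      have : ((X % m : ℕ) : ℚ) < m := by exact_mod_cast hqr
      linarith
    have hv1' : (1 : ℚ) ≤ (v : ℚ) := by exact_mod_cast hv1
    push_cast
    nlinarith
  rw [h0] at hcard
  have hmax : max (⌊(((X : ℕ) : ℚ) - (v : ℚ)) / (m : ℚ)⌋ - (-1)) 0
      = ⌊(((X : ℕ) : ℚ) - (v : ℚ)) / (m : ℚ)⌋ + 1 := by omega
  rw [hmax] at hcard
  omega

noncomputable def isUnitEquivUnits {M : Type*} [Monoid M] : {c : M // IsUnit c} ≃ Mˣ where
  toFun c := c.2.unit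
  invFun u := ⟨↑u, u.isUnit⟩
  left_inv c := by apply Subtype.ext; simp
  right_inv u := by apply Units.ext; simp

/-- Asymptotic losing density for unbounded integer MuM (unit-restricted):
the proportion of `n`-tuples of integers in `[1, X]` coprime to `m` whose
product is `≡ 1 (mod m)` tends to `1/φ(m)` as `X → ∞`. -/
theorem losing_density_asymptotic (m n : ℕ) (hm : 2 ≤ m) (hn : 1 ≤ n)
    (A B : ℕ → ℕ)
    (hA : ∀ X, A X = Nat.card {t : Fin n → ℕ //
        (∀ i, 1 ≤ t i ∧ t i ≤ X ∧ Nat.Coprime (t i) m) ∧ (∏ i, t i) ≡ 1 [MOD m]})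
    (hB : ∀ X, B X = Nat.card {t : Fin n → ℕ //
        ∀ i, 1 ≤ t i ∧ t i ≤ X ∧ Nat.Coprime (t i) m}) :
    Tendsto (fun X => (A X : ℝ) / (B X : ℝ)) atTop
      (nhds (1 / (Nat.totient m : ℝ))) := by
  classical
  haveI : NeZero m := ⟨by omega⟩
  obtain ⟨k, rfl⟩ : ∃ k, n = k + 1 := ⟨n - 1, by omega⟩
  have hφ : 0 < Nat.totient m := Nat.totient_pos.mpr (by omega)
  -- fiber sets over S X
  have hfib : ∀ (X : ℕ) (c : ZMod m), IsUnit c →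
      {x ∈ {x ∈ Finset.Ioc 0 X | Nat.Coprime x m} | ((x : ℕ) : ZMod m) = c}
        = {x ∈ Finset.Ioc 0 X | ((x : ℕ) : ZMod m) = c} := by
    intro X c hc
    ext x
    simp only [Finset.mem_filter]
    constructor
    · rintro ⟨⟨hx, _⟩, hxc⟩; exact ⟨hx, hxc⟩
    · rintro ⟨hx, hxc⟩
      exact ⟨⟨hx, (ZMod.isUnit_iff_coprime x m).mp (hxc ▸ hc)⟩, hxc⟩
  -- B count
  have hBcard : ∀ X, B X = (#{x ∈ Finset.Ioc 0 X | Nat.Coprime x m}) ^ (k + 1) := by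
    intro X
    rw [hB X]
    have e : {t : Fin (k + 1) → ℕ // ∀ i, 1 ≤ t i ∧ t i ≤ X ∧ Nat.Coprime (t i) m}
        ≃ {t // t ∈ Fintype.piFinset
            (fun _ : Fin (k + 1) => {x ∈ Finset.Ioc 0 X | Nat.Coprime x m})} := by
      apply Equiv.subtypeEquivRight
      intro t
      simp only [Fintype.mem_piFinset, Finset.mem_filter, Finset.mem_Ioc]
      constructor
      · intro h i; exact ⟨⟨(h i).1, (h i).2.1⟩, (h i).2.2⟩
      · intro h i; exact ⟨(h i).1.1, (h i).1.2, (h i).2⟩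
    rw [Nat.card_congr e, Nat.card_eq_finsetCard, Fintype.card_piFinset]
    simp
  -- A count
  have hAcard : ∀ X, A X = ∑ r ∈ {r ∈ (univ : Finset (Fin (k + 1) → ZMod m)) | ∏ i, r i = 1},
      ∏ i, #{x ∈ Finset.Ioc 0 X | ((x : ℕ) : ZMod m) = r i} := by
    intro X
    rw [hA X]
    have e : {t : Fin (k + 1) → ℕ //
        (∀ i, 1 ≤ t i ∧ t i ≤ X ∧ Nat.Coprime (t i) m) ∧ (∏ i, t i) ≡ 1 [MOD m]}
        ≃ {t // t ∈ {t ∈ Fintype.piFinset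
            (fun _ : Fin (k + 1) => {x ∈ Finset.Ioc 0 X | Nat.Coprime x m}) |
              ∏ i, ((t i : ℕ) : ZMod m) = 1}} := by
      apply Equiv.subtypeEquivRight
      intro t
      have hmod : ((∏ i, t i) ≡ 1 [MOD m]) ↔ (∏ i, ((t i : ℕ) : ZMod m)) = 1 := by
        rw [← ZMod.natCast_eq_natCast_iff, Nat.cast_prod, Nat.cast_one]
      simp only [Finset.mem_filter, Fintype.mem_piFinset, Finset.mem_Ioc, hmod]
      constructor
      · rintro ⟨h1, h2⟩
        exact ⟨fun i => ⟨⟨(h1 i).1, (h1 i).2.1⟩, (h1 i).2.2⟩, h2⟩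
      · rintro ⟨h1, h2⟩
        exact ⟨fun i => ⟨(h1 i).1.1, (h1 i).1.2, (h1 i).2⟩, h2⟩
    rw [Nat.card_congr e, Nat.card_eq_finsetCard]
    rw [Finset.card_eq_sum_card_fiberwise
      (f := fun (t : Fin (k + 1) → ℕ) (i : Fin (k + 1)) => ((t i : ℕ) : ZMod m))
      (t := {r ∈ (univ : Finset (Fin (k + 1) → ZMod m)) | ∏ i, r i = 1})
      (fun t ht => Finset.mem_filter.mpr ⟨Finset.mem_univ _, (Finset.mem_filter.1 ht).2⟩)]
    apply Finset.sum_congr rfl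
    intro r hr
    have hr1 : ∏ i, r i = 1 := (Finset.mem_filter.1 hr).2
    have hru : ∀ i, IsUnit (r i) := fun i =>
      isUnit_of_dvd_one (hr1 ▸ Finset.dvd_prod_of_mem r (Finset.mem_univ i))
    have hfeq : {t ∈ {t ∈ Fintype.piFinset
            (fun _ : Fin (k + 1) => {x ∈ Finset.Ioc 0 X | Nat.Coprime x m}) |
              ∏ i, ((t i : ℕ) : ZMod m) = 1} |
          (fun i => ((t i : ℕ) : ZMod m)) = r}
        = Fintype.piFinset (fun i => {x ∈ {x ∈ Finset.Ioc 0 X | Nat.Coprime x m} |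
            ((x : ℕ) : ZMod m) = r i}) := by
      ext t
      simp only [Finset.mem_filter, Fintype.mem_piFinset, funext_iff]
      constructor
      · rintro ⟨⟨h1, _⟩, h3⟩ i
        exact ⟨h1 i, h3 i⟩
      · intro h
        refine ⟨⟨fun i => (h i).1, ?_⟩, fun i => (h i).2⟩
        rw [Finset.prod_congr rfl fun i _ => (h i).2]
        exact hr1
    rw [hfeq, Fintype.card_piFinset]
    exact Finset.prod_congr rfl fun i _ => by rw [hfib X (r i) (hru i)]
  -- S card as a sum over units
  have hUcard : #{c ∈ (univ : Finset (ZMod m)) | IsUnit c} = Nat.totient m := by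
    rw [← Fintype.card_subtype, Fintype.card_congr (isUnitEquivUnits (M := ZMod m))]
    exact ZMod.card_units_eq_totient m
  have hScard : ∀ X, #{x ∈ Finset.Ioc 0 X | Nat.Coprime x m}
      = ∑ c ∈ {c ∈ (univ : Finset (ZMod m)) | IsUnit c},
          #{x ∈ Finset.Ioc 0 X | ((x : ℕ) : ZMod m) = c} := by
    intro X
    rw [Finset.card_eq_sum_card_fiberwise
      (f := fun x : ℕ => ((x : ℕ) : ZMod m))
      (t := {c ∈ (univ : Finset (ZMod m)) | IsUnit c})
      (fun x hx => Finset.mem_filter.mpr ⟨Finset.mem_univ _,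
        (ZMod.isUnit_iff_coprime x m).mpr (Finset.mem_filter.1 hx).2⟩)]
    apply Finset.sum_congr rfl
    intro c hc
    rw [hfib X c (Finset.mem_filter.1 hc).2]
  -- natural-number bounds
  have hSlb : ∀ X, Nat.totient m * (X / m) ≤ #{x ∈ Finset.Ioc 0 X | Nat.Coprime x m} := by
    intro X
    rw [hScard X]
    calc Nat.totient m * (X / m)
        = #{c ∈ (univ : Finset (ZMod m)) | IsUnit c} • (X / m) := by
          rw [hUcard, smul_eq_mul]
      _ ≤ _ := Finset.card_nsmul_le_sum _ _ _ fun c hc =>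
          (resCount_bounds m X hm c (Finset.mem_filter.1 hc).2).1
  have hSub : ∀ X, #{x ∈ Finset.Ioc 0 X | Nat.Coprime x m} ≤ Nat.totient m * (X / m + 1) := by
    intro X
    rw [hScard X]
    calc _ ≤ #{c ∈ (univ : Finset (ZMod m)) | IsUnit c} • (X / m + 1) :=
          Finset.sum_le_card_nsmul _ _ _ fun c hc =>
            (resCount_bounds m X hm c (Finset.mem_filter.1 hc).2).2
      _ = Nat.totient m * (X / m + 1) := by rw [hUcard, smul_eq_mul]
  have hAlb : ∀ X, Nat.totient m ^ k * (X / m) ^ (k + 1) ≤ A X := by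
    intro X
    rw [hAcard X]
    calc Nat.totient m ^ k * (X / m) ^ (k + 1)
        = #{r ∈ (univ : Finset (Fin (k + 1) → ZMod m)) | ∏ i, r i = 1} • ((X / m) ^ (k + 1)) := by
          rw [card_prodOne m k, smul_eq_mul]
      _ ≤ _ := Finset.card_nsmul_le_sum _ _ _ fun r hr => by
          have hr1 : ∏ i, r i = 1 := (Finset.mem_filter.1 hr).2
          have hru : ∀ i, IsUnit (r i) := fun i =>
            isUnit_of_dvd_one (hr1 ▸ Finset.dvd_prod_of_mem r (Finset.mem_univ i))
          calc (X / m) ^ (k + 1) = ∏ _i : Fin (k + 1), (X / m) := by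
                rw [Finset.prod_const]; simp
            _ ≤ _ := Finset.prod_le_prod' fun i _ =>
                (resCount_bounds m X hm (r i) (hru i)).1
  have hAub : ∀ X, A X ≤ Nat.totient m ^ k * (X / m + 1) ^ (k + 1) := by
    intro X
    rw [hAcard X]
    calc _ ≤ #{r ∈ (univ : Finset (Fin (k + 1) → ZMod m)) | ∏ i, r i = 1}
            • ((X / m + 1) ^ (k + 1)) :=
          Finset.sum_le_card_nsmul _ _ _ fun r hr => by
            have hr1 : ∏ i, r i = 1 := (Finset.mem_filter.1 hr).2
            have hru : ∀ i, IsUnit (r i) := fun i =>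
              isUnit_of_dvd_one (hr1 ▸ Finset.dvd_prod_of_mem r (Finset.mem_univ i))
            calc ∏ i, #{x ∈ Finset.Ioc 0 X | ((x : ℕ) : ZMod m) = r i}
                ≤ ∏ _i : Fin (k + 1), (X / m + 1) := Finset.prod_le_prod' fun i _ =>
                  (resCount_bounds m X hm (r i) (hru i)).2
              _ = (X / m + 1) ^ (k + 1) := by rw [Finset.prod_const]; simp
      _ = Nat.totient m ^ k * (X / m + 1) ^ (k + 1) := by rw [card_prodOne m k, smul_eq_mul]
  -- limits of the bounding functions
  have hQtend : Tendsto (fun X : ℕ => X / m) atTop atTop := by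
    apply Filter.tendsto_atTop_atTop.mpr
    intro b
    exact ⟨b * m, fun a ha => (Nat.le_div_iff_mul_le (by omega)).mpr ha⟩
  have hφR : (0 : ℝ) < (Nat.totient m : ℝ) := by exact_mod_cast hφ
  have hg : Tendsto (fun X : ℕ => (1 / (Nat.totient m : ℝ))
      * (((X / m : ℕ) : ℝ) / (((X / m : ℕ) : ℝ) + 1)) ^ (k + 1)) atTop
      (nhds (1 / (Nat.totient m : ℝ))) := by
    have h1 : Tendsto (fun j : ℕ => ((j : ℝ) / ((j : ℝ) + 1))) atTop (nhds 1) := by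
      simpa using tendsto_natCast_div_add_atTop (1 : ℝ)
    have h2 := ((h1.pow (k + 1)).const_mul (1 / (Nat.totient m : ℝ))).comp hQtend
    simpa [Function.comp_def] using h2
  have hh : Tendsto (fun X : ℕ => (1 / (Nat.totient m : ℝ))
      * ((((X / m : ℕ) : ℝ) + 1) / ((X / m : ℕ) : ℝ)) ^ (k + 1)) atTop
      (nhds (1 / (Nat.totient m : ℝ))) := by
    have h1 : Tendsto (fun j : ℕ => (((j : ℝ) + 1) / (j : ℝ))) atTop (nhds 1) := by
      have := (tendsto_natCast_div_add_atTop (1 : ℝ)).inv₀ one_ne_zero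
      simpa [inv_div] using this
    have h2 := ((h1.pow (k + 1)).const_mul (1 / (Nat.totient m : ℝ))).comp hQtend
    simpa [Function.comp_def] using h2
  -- squeeze
  apply tendsto_of_tendsto_of_tendsto_of_le_of_le' hg hh
  · filter_upwards [eventually_ge_atTop m] with X hX
    have hq1 : 1 ≤ X / m := (Nat.one_le_div_iff (by omega)).mpr hX
    have hqr1 : (1 : ℝ) ≤ ((X / m : ℕ) : ℝ) := by exact_mod_cast hq1
    have hA_lb : (Nat.totient m : ℝ) ^ k * ((X / m : ℕ) : ℝ) ^ (k + 1) ≤ (A X : ℝ) := by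
      exact_mod_cast hAlb X
    have hB_ub : (B X : ℝ) ≤ (Nat.totient m : ℝ) ^ (k + 1) * (((X / m : ℕ) : ℝ) + 1) ^ (k + 1) := by
      have h1 : B X ≤ (Nat.totient m * (X / m + 1)) ^ (k + 1) := by
        rw [hBcard X]; exact Nat.pow_le_pow_left (hSub X) _
      have h2 : (B X : ℝ) ≤ ((Nat.totient m * (X / m + 1) : ℕ) : ℝ) ^ (k + 1) := by
        exact_mod_cast h1
      calc (B X : ℝ) ≤ ((Nat.totient m * (X / m + 1) : ℕ) : ℝ) ^ (k + 1) := h2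
        _ = (Nat.totient m : ℝ) ^ (k + 1) * (((X / m : ℕ) : ℝ) + 1) ^ (k + 1) := by
          push_cast; rw [mul_pow]
    have hB_lb : (Nat.totient m : ℝ) ^ (k + 1) * ((X / m : ℕ) : ℝ) ^ (k + 1) ≤ (B X : ℝ) := by
      have h1 : (Nat.totient m * (X / m)) ^ (k + 1) ≤ B X := by
        rw [hBcard X]; exact Nat.pow_le_pow_left (hSlb X) _
      have h2 : ((Nat.totient m * (X / m) : ℕ) : ℝ) ^ (k + 1) ≤ (B X : ℝ) := by
        exact_mod_cast h1
      calc (Nat.totient m : ℝ) ^ (k + 1) * ((X / m : ℕ) : ℝ) ^ (k + 1)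
          = ((Nat.totient m * (X / m) : ℕ) : ℝ) ^ (k + 1) := by push_cast; rw [mul_pow]
        _ ≤ (B X : ℝ) := h2
    have hB_pos : (0 : ℝ) < (B X : ℝ) := by
      refine lt_of_lt_of_le ?_ hB_lb
      exact mul_pos (pow_pos hφR _) (pow_pos (by linarith) _)
    have key : (1 / (Nat.totient m : ℝ))
        * (((X / m : ℕ) : ℝ) / (((X / m : ℕ) : ℝ) + 1)) ^ (k + 1)
        = ((Nat.totient m : ℝ) ^ k * ((X / m : ℕ) : ℝ) ^ (k + 1))
          / ((Nat.totient m : ℝ) ^ (k + 1) * (((X / m : ℕ) : ℝ) + 1) ^ (k + 1)) := by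
      rw [div_pow, pow_succ]
      field_simp
      ring
    rw [key]
    exact div_le_div₀ (Nat.cast_nonneg _) hA_lb hB_pos hB_ub
  · filter_upwards [eventually_ge_atTop m] with X hX
    have hq1 : 1 ≤ X / m := (Nat.one_le_div_iff (by omega)).mpr hX
    have hqr1 : (1 : ℝ) ≤ ((X / m : ℕ) : ℝ) := by exact_mod_cast hq1
    have hA_ub : (A X : ℝ) ≤ (Nat.totient m : ℝ) ^ k * (((X / m : ℕ) : ℝ) + 1) ^ (k + 1) := by
      have h1 : A X ≤ Nat.totient m ^ k * (X / m + 1) ^ (k + 1) := hAub X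
      calc (A X : ℝ) ≤ ((Nat.totient m ^ k * (X / m + 1) ^ (k + 1) : ℕ) : ℝ) := by
            exact_mod_cast h1
        _ = (Nat.totient m : ℝ) ^ k * (((X / m : ℕ) : ℝ) + 1) ^ (k + 1) := by push_cast; ring
    have hB_lb : (Nat.totient m : ℝ) ^ (k + 1) * ((X / m : ℕ) : ℝ) ^ (k + 1) ≤ (B X : ℝ) := by
      have h1 : (Nat.totient m * (X / m)) ^ (k + 1) ≤ B X := by
        rw [hBcard X]; exact Nat.pow_le_pow_left (hSlb X) _
      have h2 : ((Nat.totient m * (X / m) : ℕ) : ℝ) ^ (k + 1) ≤ (B X : ℝ) := by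
        exact_mod_cast h1
      calc (Nat.totient m : ℝ) ^ (k + 1) * ((X / m : ℕ) : ℝ) ^ (k + 1)
          = ((Nat.totient m * (X / m) : ℕ) : ℝ) ^ (k + 1) := by push_cast; rw [mul_pow]
        _ ≤ (B X : ℝ) := h2
    have hden_pos : (0 : ℝ) < (Nat.totient m : ℝ) ^ (k + 1) * ((X / m : ℕ) : ℝ) ^ (k + 1) :=
      mul_pos (pow_pos hφR _) (pow_pos (by linarith) _)
    have key : (1 / (Nat.totient m : ℝ))
        * ((((X / m : ℕ) : ℝ) + 1) / ((X / m : ℕ) : ℝ)) ^ (k + 1)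
        = ((Nat.totient m : ℝ) ^ k * (((X / m : ℕ) : ℝ) + 1) ^ (k + 1))
          / ((Nat.totient m : ℝ) ^ (k + 1) * ((X / m : ℕ) : ℝ) ^ (k + 1)) := by
      rw [div_pow, pow_succ]
      have hq0 : ((X / m : ℕ) : ℝ) ≠ 0 := by linarith
      field_simp
      ring
    rw [key]
    exact div_le_div₀ (by positivity) hA_ub hden_pos hB_lb
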